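/- Let S be a finite or countable set, x0 ∈ S, α > 0, and let q be a probability mass function on S with q(x0) > 0. Let X = (X_n)_{n≥0} be the S-valued process with X_0 = x0 whose law is determined (via the Ionescu–Tulcea theorem) by the predictive probabilities P(X_{n+1} = j | X_0 = x0, X_1,…,X_{n-1} = x, X_n = i) = (α q(j) + T_{i,j}(x0,x,i)) / (α + T_{i,·}(x0,x,i)), where T_{i,·}(z) = ∑_{j'} T_{i,j'}(z). Then X is recurrent: almost surely X_n = x0 for infinitely many n. -/

import Mathlib

/-!
STATEMENT 19: the reinforced Hoppe urn process with common weight `α` and common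
color distribution `q`, with `q(x0) > 0`, is recurrent.
-/

open MeasureTheory Filter
open scoped ENNReal NNReal Topology

variable {S : Type*} [DecidableEq S]

/-- The number of transitions from `i` to `j` in the finite string `z`. -/
def transCount (z : List S) (i j : S) : ℕ :=
  (z.zip z.tail).countP (fun q => decide (q = (i, j)))

/-- The number of transitions from `i` in the finite string `z`. -/
def transFrom (z : List S) (i : S) : ℕ :=
  (z.zip z.tail).countP (fun q => decide (q.1 = i))

/-- One-step predictive probability of the reinforced Hoppe urn scheme: the past
path is `z` (starting at `x0`, ending at the current state), the next state is `y`. -/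
noncomputable def hoppeStep (α : S → ℝ) (q : S → S → ℝ) (z : List S) (y : S) : ℝ :=
  match z.getLast? with
  | none => 0
  | some i => (α i * q i y + (transCount z i y : ℝ)) / (α i + (transFrom z i : ℝ))

/-- The probability of appending the string `x` to the past path `z`. -/
noncomputable def lawFrom (step : List S → S → ℝ) : List S → List S → ℝ
  | _, [] => 1
  | z, y :: rest => step z y * lawFrom step (z ++ [y]) rest

/-- The process law of the reinforced Hoppe urn scheme started at `x0`. -/
noncomputable def hoppeLaw (α : S → ℝ) (q : S → S → ℝ) (x0 : S) (x : List S) : ℝ :=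
  lawFrom (hoppeStep α q) [x0] x

/-- The event `{X_1 = x_1, …, X_n = x_n}` for a finite string `x = (x_1, …, x_n)`. -/
def pathEvent {Ω : Type*} (X : ℕ → Ω → S) (x : List S) : Set Ω :=
  {ω | (List.range x.length).map (fun k => X (k + 1) ω) = x}

-- auxiliary lemmas

lemma tsum_countP_pair (i : S) : ∀ l : List (S × S),
    (∑' j : S, ((l.countP fun p => decide (p = (i, j))) : ℝ≥0∞))
      = ((l.countP fun p => decide (p.1 = i)) : ℝ≥0∞)
  | [] => by simp
  | a :: l => by
    simp only [List.countP_cons, Nat.cast_add, Nat.cast_ite, Nat.cast_one, Nat.cast_zero]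
    rw [ENNReal.tsum_add, tsum_countP_pair i l]
    congr 1
    obtain ⟨a1, a2⟩ := a
    by_cases h : a1 = i
    · subst h
      rw [show (fun j : S => (if decide ((a1, a2) = (a1, j)) = true then (1:ℝ≥0∞) else 0)) = fun j => if j = a2 then 1 else 0 by
        funext j; by_cases hj : j = a2 <;> simp [Prod.ext_iff, eq_comm, hj]]
      rw [tsum_ite_eq a2]
      simp
    · simp [Prod.ext_iff, h]

lemma transFrom_le (z : List S) (i : S) : transFrom z i ≤ z.length - 1 := by
  unfold transFrom
  calc (z.zip z.tail).countP _ ≤ (z.zip z.tail).length := List.countP_le_length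
  _ ≤ z.length - 1 := by rw [List.length_zip, List.length_tail]; omega

lemma hoppeStep_nonneg {α : ℝ} {q : S → ℝ} (hα : 0 < α) (hq0 : ∀ y, 0 ≤ q y)
    (z : List S) (y : S) : 0 ≤ hoppeStep (fun _ => α) (fun _ => q) z y := by
  unfold hoppeStep
  split
  · exact le_rfl
  · exact div_nonneg (add_nonneg (mul_nonneg hα.le (hq0 y)) (Nat.cast_nonneg _))
      (add_nonneg hα.le (Nat.cast_nonneg _))

lemma lawFrom_nonneg (step : List S → S → ℝ) (hstep : ∀ z y, 0 ≤ step z y) :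
    ∀ (x z : List S), 0 ≤ lawFrom step z x
  | [], _ => by rw [lawFrom]; norm_num
  | y :: r, z => mul_nonneg (hstep z y) (lawFrom_nonneg step hstep r (z ++ [y]))

lemma lawFrom_append (step : List S → S → ℝ) :
    ∀ (a b z : List S), lawFrom step z (a ++ b) = lawFrom step z a * lawFrom step (z ++ a) b
  | [], b, z => by simp [lawFrom]
  | y :: r, b, z => by
    show lawFrom step z ((y :: r) ++ b) = _
    rw [List.cons_append]
    show step z y * lawFrom step (z ++ [y]) (r ++ b) = step z y * lawFrom step (z ++ [y]) r * lawFrom step (z ++ y :: r) b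
    rw [lawFrom_append step r b (z ++ [y]), show z ++ [y] ++ r = z ++ (y :: r) by simp, mul_assoc]

lemma tsum_step {α : ℝ} {q : S → ℝ} (hα : 0 < α) (hq0 : ∀ y, 0 ≤ q y) (hq1 : HasSum q 1)
    (z : List S) (hz : z ≠ []) :
    ∑' y : S, ENNReal.ofReal (hoppeStep (fun _ => α) (fun _ => q) z y) = 1 := by
  obtain ⟨i, hi⟩ := Option.isSome_iff_exists.mp (List.getLast?_isSome.mpr hz)
  have hD : (0:ℝ) < α + (transFrom z i : ℝ) := by positivity
  simp only [hoppeStep, hi]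
  have h1 : ∀ y : S, ENNReal.ofReal ((α * q y + (transCount z i y : ℝ)) / (α + (transFrom z i : ℝ)))
      = (ENNReal.ofReal (α * q y) + ((transCount z i y : ℕ) : ℝ≥0∞))
          * (ENNReal.ofReal (α + (transFrom z i : ℝ)))⁻¹ := by
    intro y
    rw [ENNReal.ofReal_div_of_pos hD,
      ENNReal.ofReal_add (mul_nonneg hα.le (hq0 y)) (Nat.cast_nonneg _),
      ENNReal.ofReal_natCast, div_eq_mul_inv]
  simp only [h1]
  rw [ENNReal.tsum_mul_right, ENNReal.tsum_add,
    ← ENNReal.ofReal_tsum_of_nonneg (fun y => mul_nonneg hα.le (hq0 y)) (hq1.summable.mul_left α),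
    (hq1.mul_left α).tsum_eq]
  have h2 : ∑' y : S, ((transCount z i y : ℕ) : ℝ≥0∞) = ((transFrom z i : ℕ) : ℝ≥0∞) := by
    simp only [transCount, transFrom]
    exact tsum_countP_pair i (z.zip z.tail)
  rw [h2, mul_one, ENNReal.ofReal_add hα.le (Nat.cast_nonneg _), ENNReal.ofReal_natCast,
    ← div_eq_mul_inv]
  exact ENNReal.div_self (by simp [ENNReal.ofReal_pos.mpr hα, (ENNReal.ofReal_pos.mpr hα).ne'])
    (by finiteness)

lemma tsum_step_ne {α : ℝ} {q : S → ℝ} {x0 : S} (hα : 0 < α) (hq0 : ∀ y, 0 ≤ q y)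
    (hq1 : HasSum q 1) (hqx0 : 0 < q x0)
    (z : List S) (hz : z ≠ []) (n : ℕ) (hn : z.length - 1 ≤ n) :
    ∑' y : {y : S // y ≠ x0}, ENNReal.ofReal (hoppeStep (fun _ => α) (fun _ => q) z ↑y)
      ≤ ENNReal.ofReal (1 - α * q x0 / (α + (n : ℝ))) := by
  obtain ⟨i, hi⟩ := Option.isSome_iff_exists.mp (List.getLast?_isSome.mpr hz)
  set f : S → ℝ≥0∞ := fun y => ENNReal.ofReal (hoppeStep (fun _ => α) (fun _ => q) z y) with hf
  have htot : ∑' y : S, f y = 1 := tsum_step hα hq0 hq1 z hz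
  have hsub : ∑' y : {y : S // y ≠ x0}, f ↑y = ∑' y : S, if y = x0 then 0 else f y := by
    rw [show ∑' y : {y : S // y ≠ x0}, f ↑y = ∑' y : ({y : S | y ≠ x0} : Set S), f ↑y from rfl,
      tsum_subtype]
    refine tsum_congr fun y => ?_
    by_cases h : y = x0 <;> simp [Set.indicator, h]
  have hδn : (0:ℝ) < α + (n : ℝ) := by positivity
  have hx0 : ENNReal.ofReal (α * q x0 / (α + (n : ℝ))) ≤ f x0 := by
    apply ENNReal.ofReal_le_ofReal
    show _ ≤ hoppeStep _ _ z x0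
    simp only [hoppeStep, hi]
    refine div_le_div₀ (by positivity) (le_add_of_nonneg_right (Nat.cast_nonneg _)) (by positivity) ?_
    have : (transFrom z i : ℝ) ≤ (n : ℝ) := by
      exact_mod_cast le_trans (transFrom_le z i) hn
    linarith
  have hrest : (∑' y : S, if y = x0 then 0 else f y) + ENNReal.ofReal (α * q x0 / (α + (n : ℝ))) ≤ 1 := by
    calc (∑' y : S, if y = x0 then 0 else f y) + ENNReal.ofReal (α * q x0 / (α + (n : ℝ)))
        ≤ (∑' y : S, if y = x0 then 0 else f y) + f x0 := add_le_add_right hx0 _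
      _ = 1 := by
          rw [add_comm]
          have h := (ENNReal.tsum_eq_add_tsum_ite (f := f) x0).symm.trans htot
          convert h using 4
          split_ifs <;> rfl
  rw [hsub]
  have := ENNReal.le_sub_of_add_le_right (by finiteness) hrest
  refine this.trans (le_of_eq ?_)
  rw [ENNReal.ofReal_sub 1 (by positivity), ENNReal.ofReal_one]

lemma ofReal_prod_of_nonneg' {ι : Type*} (s : Finset ι) (f : ι → ℝ) (h : ∀ i ∈ s, 0 ≤ f i) :
    ENNReal.ofReal (∏ i ∈ s, f i) = ∏ i ∈ s, ENNReal.ofReal (f i) := by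
  induction s using Finset.cons_induction with
  | empty => simp
  | cons a s ha ih =>
    rw [Finset.prod_cons, Finset.prod_cons, ENNReal.ofReal_mul (h a (Finset.mem_cons_self a s)),
      ih fun i hi => h i (Finset.mem_cons_of_mem hi)]

lemma tsum_lawFrom_avoid {α : ℝ} {q : S → ℝ} {x0 : S} (hα : 0 < α) (hq0 : ∀ y, 0 ≤ q y)
    (hq1 : HasSum q 1) (hqx0 : 0 < q x0) :
    ∀ (L : ℕ) (z : List S) (n : ℕ), z.length = n + 1 →
    ∑' x : Fin L → {y : S // y ≠ x0},
        ENNReal.ofReal (lawFrom (hoppeStep (fun _ => α) (fun _ => q)) z (List.ofFn fun k => ↑(x k)))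
      ≤ ∏ k ∈ Finset.range L, ENNReal.ofReal (1 - α * q x0 / (α + ((n + k : ℕ) : ℝ))) := by
  intro L
  induction L with
  | zero =>
    intro z n hzn
    rw [tsum_eq_single (default : Fin 0 → {y : S // y ≠ x0})
      (fun b' hb' => absurd (Subsingleton.elim b' default) hb')]
    simp [lawFrom]
  | succ L IH =>
    intro z n hzn
    have hz : z ≠ [] := by intro h; simp [h] at hzn
    have h1 : ∀ p : {y : S // y ≠ x0} × (Fin L → {y : S // y ≠ x0}),
        ENNReal.ofReal (lawFrom (hoppeStep (fun _ => α) (fun _ => q)) z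
          (List.ofFn fun k => ↑((Fin.consEquiv fun _ => {y : S // y ≠ x0}) p k)))
        = ENNReal.ofReal (hoppeStep (fun _ => α) (fun _ => q) z ↑p.1)
          * ENNReal.ofReal (lawFrom (hoppeStep (fun _ => α) (fun _ => q)) (z ++ [(p.1 : S)])
              (List.ofFn fun k => ↑(p.2 k))) := by
      rintro ⟨a, v⟩
      have he : (List.ofFn fun k => ↑((Fin.consEquiv fun _ => {y : S // y ≠ x0}) (a, v) k))
          = ((a : S)) :: List.ofFn fun k => ↑(v k) := by
        rw [show ((Fin.consEquiv fun _ => {y : S // y ≠ x0}) (a, v)) = Fin.cons a v from rfl,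
          List.ofFn_succ]
        simp
      rw [he]
      show ENNReal.ofReal (hoppeStep (fun _ => α) (fun _ => q) z ↑a *
        lawFrom (hoppeStep (fun _ => α) (fun _ => q)) (z ++ [(a : S)]) (List.ofFn fun k => ↑(v k))) = _
      rw [ENNReal.ofReal_mul (hoppeStep_nonneg hα hq0 z ↑a)]
    calc ∑' x : Fin (L+1) → {y : S // y ≠ x0},
        ENNReal.ofReal (lawFrom (hoppeStep (fun _ => α) (fun _ => q)) z (List.ofFn fun k => ↑(x k)))
        = ∑' p : {y : S // y ≠ x0} × (Fin L → {y : S // y ≠ x0}),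
            ENNReal.ofReal (hoppeStep (fun _ => α) (fun _ => q) z ↑p.1)
            * ENNReal.ofReal (lawFrom (hoppeStep (fun _ => α) (fun _ => q)) (z ++ [(p.1 : S)])
                (List.ofFn fun k => ↑(p.2 k))) := by
          rw [← Equiv.tsum_eq (Fin.consEquiv fun _ => {y : S // y ≠ x0})
            (fun x => ENNReal.ofReal (lawFrom (hoppeStep (fun _ => α) (fun _ => q)) z
              (List.ofFn fun k => ↑(x k))))]
          exact tsum_congr h1
      _ = ∑' a : {y : S // y ≠ x0}, ENNReal.ofReal (hoppeStep (fun _ => α) (fun _ => q) z ↑a)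
            * ∑' v : Fin L → {y : S // y ≠ x0},
                ENNReal.ofReal (lawFrom (hoppeStep (fun _ => α) (fun _ => q)) (z ++ [(a : S)])
                  (List.ofFn fun k => ↑(v k))) := by
          rw [ENNReal.tsum_prod']
          refine tsum_congr fun a => ?_
          show (∑' b : Fin L → {y : S // y ≠ x0},
              ENNReal.ofReal (hoppeStep (fun _ => α) (fun _ => q) z ↑a)
                * ENNReal.ofReal (lawFrom (hoppeStep (fun _ => α) (fun _ => q)) (z ++ [(a : S)])
                    (List.ofFn fun k => ↑(b k)))) = _
          exact ENNReal.tsum_mul_left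
      _ ≤ ∑' a : {y : S // y ≠ x0}, ENNReal.ofReal (hoppeStep (fun _ => α) (fun _ => q) z ↑a)
            * ∏ k ∈ Finset.range L, ENNReal.ofReal (1 - α * q x0 / (α + ((n + 1 + k : ℕ) : ℝ))) := by
          refine ENNReal.tsum_le_tsum fun a => mul_le_mul_right (IH (z ++ [(a : S)]) (n+1) ?_) _
          simp [hzn]
      _ = (∑' a : {y : S // y ≠ x0}, ENNReal.ofReal (hoppeStep (fun _ => α) (fun _ => q) z ↑a))
            * ∏ k ∈ Finset.range L, ENNReal.ofReal (1 - α * q x0 / (α + ((n + 1 + k : ℕ) : ℝ))) := by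
          rw [ENNReal.tsum_mul_right]
      _ ≤ ENNReal.ofReal (1 - α * q x0 / (α + (n : ℝ)))
            * ∏ k ∈ Finset.range L, ENNReal.ofReal (1 - α * q x0 / (α + ((n + 1 + k : ℕ) : ℝ))) :=
          mul_le_mul_left (tsum_step_ne hα hq0 hq1 hqx0 z hz n (by simp [hzn])) _
      _ = ∏ k ∈ Finset.range (L+1), ENNReal.ofReal (1 - α * q x0 / (α + ((n + k : ℕ) : ℝ))) := by
          rw [Finset.prod_range_succ' (fun k => ENNReal.ofReal (1 - α * q x0 / (α + ((n + k : ℕ) : ℝ)))) L]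
          rw [mul_comm]
          congr 1
          · refine Finset.prod_congr rfl fun k _ => ?_
            rw [show n + (k + 1) = n + 1 + k by omega]

lemma tsum_lawFrom_le_one {α : ℝ} {q : S → ℝ} (hα : 0 < α) (hq0 : ∀ y, 0 ≤ q y)
    (hq1 : HasSum q 1) :
    ∀ (L : ℕ) (z : List S), z ≠ [] →
    ∑' w : Fin L → S,
      ENNReal.ofReal (lawFrom (hoppeStep (fun _ => α) (fun _ => q)) z (List.ofFn w)) ≤ 1 := by
  intro L
  induction L with
  | zero =>
    intro z hz
    rw [tsum_eq_single (default : Fin 0 → S)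
      (fun b' hb' => absurd (Subsingleton.elim b' default) hb')]
    simp [lawFrom]
  | succ L IH =>
    intro z hz
    have h1 : ∀ p : S × (Fin L → S),
        ENNReal.ofReal (lawFrom (hoppeStep (fun _ => α) (fun _ => q)) z
          (List.ofFn ((Fin.consEquiv fun _ => S) p)))
        = ENNReal.ofReal (hoppeStep (fun _ => α) (fun _ => q) z p.1)
          * ENNReal.ofReal (lawFrom (hoppeStep (fun _ => α) (fun _ => q)) (z ++ [p.1])
              (List.ofFn p.2)) := by
      rintro ⟨a, v⟩
      have he : (List.ofFn ((Fin.consEquiv fun _ => S) (a, v))) = a :: List.ofFn v := by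
        rw [show ((Fin.consEquiv fun _ => S) (a, v)) = Fin.cons a v from rfl, List.ofFn_succ]
        simp
      rw [he]
      show ENNReal.ofReal (hoppeStep (fun _ => α) (fun _ => q) z a *
        lawFrom (hoppeStep (fun _ => α) (fun _ => q)) (z ++ [a]) (List.ofFn v)) = _
      rw [ENNReal.ofReal_mul (hoppeStep_nonneg hα hq0 z a)]
    calc ∑' w : Fin (L+1) → S,
        ENNReal.ofReal (lawFrom (hoppeStep (fun _ => α) (fun _ => q)) z (List.ofFn w))
        = ∑' p : S × (Fin L → S),
            ENNReal.ofReal (hoppeStep (fun _ => α) (fun _ => q) z p.1)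
            * ENNReal.ofReal (lawFrom (hoppeStep (fun _ => α) (fun _ => q)) (z ++ [p.1])
                (List.ofFn p.2)) := by
          rw [← Equiv.tsum_eq (Fin.consEquiv fun _ => S)
            (fun w => ENNReal.ofReal (lawFrom (hoppeStep (fun _ => α) (fun _ => q)) z (List.ofFn w)))]
          exact tsum_congr h1
      _ = ∑' a : S, ENNReal.ofReal (hoppeStep (fun _ => α) (fun _ => q) z a)
            * ∑' v : Fin L → S,
                ENNReal.ofReal (lawFrom (hoppeStep (fun _ => α) (fun _ => q)) (z ++ [a])
                  (List.ofFn v)) := by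
          rw [ENNReal.tsum_prod']
          refine tsum_congr fun a => ?_
          show (∑' b : Fin L → S,
              ENNReal.ofReal (hoppeStep (fun _ => α) (fun _ => q) z a)
                * ENNReal.ofReal (lawFrom (hoppeStep (fun _ => α) (fun _ => q)) (z ++ [a])
                    (List.ofFn b))) = _
          exact ENNReal.tsum_mul_left
      _ ≤ ∑' a : S, ENNReal.ofReal (hoppeStep (fun _ => α) (fun _ => q) z a) * 1 :=
          ENNReal.tsum_le_tsum fun a => mul_le_mul_right (IH (z ++ [a]) (by simp)) _
      _ = 1 := by
          simp only [mul_one]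
          exact le_of_eq (tsum_step hα hq0 hq1 z hz) |>.antisymm (le_of_eq (tsum_step hα hq0 hq1 z hz).symm)

lemma hoppe_factor_prod_tendsto_zero {a c : ℝ} (ha : 0 < a) (hc : 0 < c) (hca : c ≤ a) (m : ℕ) :
    Tendsto (fun L => ∏ k ∈ Finset.range L, ENNReal.ofReal (1 - c / (a + ((m + k : ℕ) : ℝ))))
      atTop (𝓝 0) := by
  have hδpos : ∀ k : ℕ, (0:ℝ) < a + ((m + k : ℕ) : ℝ) := fun k => by positivity
  set δ : ℕ → ℝ := fun k => c / (a + ((m + k : ℕ) : ℝ)) with hδ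
  have hδ0 : ∀ k, 0 ≤ δ k := fun k => le_of_lt (div_pos hc (hδpos k))
  have hδ1 : ∀ k, 1 - δ k ≤ Real.exp (-δ k) := fun k => by
    have := Real.add_one_le_exp (-δ k); linarith
  have hbound : ∀ L, (∏ k ∈ Finset.range L, ENNReal.ofReal (1 - δ k))
      ≤ ENNReal.ofReal (Real.exp (-(∑ k ∈ Finset.range L, δ k))) := by
    intro L
    calc ∏ k ∈ Finset.range L, ENNReal.ofReal (1 - δ k)
        ≤ ∏ k ∈ Finset.range L, ENNReal.ofReal (Real.exp (-δ k)) :=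
          Finset.prod_le_prod' fun k _ => ENNReal.ofReal_le_ofReal (hδ1 k)
      _ = ENNReal.ofReal (∏ k ∈ Finset.range L, Real.exp (-δ k)) :=
          (ofReal_prod_of_nonneg' _ _ fun k _ => (Real.exp_pos _).le).symm
      _ = _ := by rw [← Real.exp_sum, ← Finset.sum_neg_distrib]
  have hdiv : Tendsto (fun L => ∑ k ∈ Finset.range L, δ k) atTop atTop := by
    rw [← not_summable_iff_tendsto_nat_atTop_of_nonneg hδ0]
    intro hsum
    have h2 : Summable (fun k : ℕ => (k:ℝ)⁻¹) := by
      refine Summable.of_nonneg_of_le (fun k => inv_nonneg.mpr (Nat.cast_nonneg _)) (fun k => ?_)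
        (hsum.mul_left ((a + m + 1) / c))
      rcases Nat.eq_zero_or_pos k with hk | hk
      · rw [hk]
        rw [show (((0:ℕ):ℝ))⁻¹ = 0 by norm_num]
        exact mul_nonneg (by positivity) (hδ0 0)
      · have hk1 : (1:ℝ) ≤ (k:ℝ) := by exact_mod_cast hk
        have hm0 : (0:ℝ) ≤ (m:ℝ) := Nat.cast_nonneg _
        have heq : (a + m + 1) / c * δ k = (a + m + 1) / (a + m + k) := by
          rw [hδ]
          have h1 : c ≠ 0 := ne_of_gt hc
          have h2 : a + (m:ℝ) + (k:ℝ) ≠ 0 := by positivity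
          push_cast
          rw [show a + ((m:ℝ) + (k:ℝ)) = a + (m:ℝ) + (k:ℝ) by ring]
          field_simp
        rw [heq, inv_eq_one_div, div_le_div_iff₀ (by linarith) (by linarith)]
        nlinarith [mul_le_mul_of_nonneg_left hk1 (le_of_lt (show (0:ℝ) < a + m by positivity))]
    exact Real.not_summable_natCast_inv h2
  have hexp : Tendsto (fun L => ENNReal.ofReal (Real.exp (-(∑ k ∈ Finset.range L, δ k))))
      atTop (𝓝 0) := by
    rw [show (0:ℝ≥0∞) = ENNReal.ofReal 0 by simp]
    exact ENNReal.tendsto_ofReal (Real.tendsto_exp_atBot.comp (tendsto_neg_atTop_atBot.comp hdiv))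
  exact tendsto_of_tendsto_of_tendsto_of_le_of_le tendsto_const_nhds hexp
    (fun L => zero_le) hbound


theorem hoppe_common_weights_recurrent [Countable S]
    (α : ℝ) (hα : 0 < α)
    (q : S → ℝ) (hq0 : ∀ j, 0 ≤ q j) (hq1 : HasSum q 1)
    (x0 : S) (hqx0 : 0 < q x0)
    [MeasurableSpace S] [MeasurableSingletonClass S]
    {Ω : Type*} [MeasurableSpace Ω] (P : Measure Ω) [IsProbabilityMeasure P]
    (X : ℕ → Ω → S) (hX : ∀ n, Measurable (X n)) (hX0 : ∀ ω, X 0 ω = x0)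
    (hlaw : ∀ x : List S,
      P (pathEvent X x) =
        ENNReal.ofReal (hoppeLaw (fun _ => α) (fun _ => q) x0 x)) :
    ∀ᵐ ω ∂P, {n : ℕ | X n ω = x0}.Infinite := by
  have hq01 : q x0 ≤ 1 := le_hasSum hq1 x0 fun j _ => hq0 j
  set A : ℕ → Set Ω := fun m => {ω | ∀ k, m < k → X k ω ≠ x0} with hA
  have hAnull : ∀ m, P (A m) = 0 := by
    intro m
    have key : ∀ L : ℕ, P (A m)
        ≤ ∏ k ∈ Finset.range L, ENNReal.ofReal (1 - α * q x0 / (α + ((m + k : ℕ) : ℝ))) := by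
      intro L
      have hsub : A m ⊆ ⋃ p : (Fin m → S) × (Fin L → {y : S // y ≠ x0}),
          pathEvent X (List.ofFn p.1 ++ List.ofFn (fun k => (p.2 k : S))) := by
        intro ω hω
        simp only [hA, Set.mem_setOf_eq] at hω
        refine Set.mem_iUnion.mpr ⟨⟨fun k : Fin m => X ((k : ℕ) + 1) ω,
          fun k : Fin L => ⟨X (m + (k : ℕ) + 1) ω, hω (m + (k : ℕ) + 1) (by omega)⟩⟩, ?_⟩
        show (List.range _).map (fun k => X (k + 1) ω) = _
        refine List.ext_getElem (by simp) ?_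
        intro i h1 h2
        simp only [List.length_append, List.length_ofFn] at h2
        simp only [List.getElem_map, List.getElem_range, List.getElem_append, List.length_ofFn,
          List.getElem_ofFn]
        split
        · rfl
        · rename_i hi
          show X (i + 1) ω = X (m + (i - m) + 1) ω
          congr 1
          omega
      calc P (A m) ≤ P (⋃ p : (Fin m → S) × (Fin L → {y : S // y ≠ x0}),
            pathEvent X (List.ofFn p.1 ++ List.ofFn (fun k => (p.2 k : S)))) := measure_mono hsub
        _ ≤ ∑' p : (Fin m → S) × (Fin L → {y : S // y ≠ x0}),
            P (pathEvent X (List.ofFn p.1 ++ List.ofFn (fun k => (p.2 k : S)))) :=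
              measure_iUnion_le _
        _ = ∑' p : (Fin m → S) × (Fin L → {y : S // y ≠ x0}),
            ENNReal.ofReal (lawFrom (hoppeStep (fun _ => α) (fun _ => q)) [x0] (List.ofFn p.1)) *
              ENNReal.ofReal (lawFrom (hoppeStep (fun _ => α) (fun _ => q))
                ([x0] ++ List.ofFn p.1) (List.ofFn (fun k => (p.2 k : S)))) := by
            refine tsum_congr fun p => ?_
            rw [hlaw]
            show ENNReal.ofReal (lawFrom (hoppeStep (fun _ => α) (fun _ => q)) [x0]
              (List.ofFn p.1 ++ List.ofFn (fun k => (p.2 k : S)))) = _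
            rw [lawFrom_append, ENNReal.ofReal_mul
              (lawFrom_nonneg _ (hoppeStep_nonneg hα hq0) _ _)]
        _ = ∑' w : Fin m → S,
            ENNReal.ofReal (lawFrom (hoppeStep (fun _ => α) (fun _ => q)) [x0] (List.ofFn w)) *
              ∑' v : Fin L → {y : S // y ≠ x0},
                ENNReal.ofReal (lawFrom (hoppeStep (fun _ => α) (fun _ => q))
                  ([x0] ++ List.ofFn w) (List.ofFn (fun k => (v k : S)))) := by
            rw [ENNReal.tsum_prod']
            refine tsum_congr fun w => ?_
            show (∑' v : Fin L → {y : S // y ≠ x0},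
              ENNReal.ofReal (lawFrom (hoppeStep (fun _ => α) (fun _ => q)) [x0] (List.ofFn w)) *
                ENNReal.ofReal (lawFrom (hoppeStep (fun _ => α) (fun _ => q))
                  ([x0] ++ List.ofFn w) (List.ofFn (fun k => (v k : S))))) = _
            exact ENNReal.tsum_mul_left
        _ ≤ ∑' w : Fin m → S,
            ENNReal.ofReal (lawFrom (hoppeStep (fun _ => α) (fun _ => q)) [x0] (List.ofFn w)) *
              ∏ k ∈ Finset.range L, ENNReal.ofReal (1 - α * q x0 / (α + ((m + k : ℕ) : ℝ))) := by
            refine ENNReal.tsum_le_tsum fun w => mul_le_mul_right ?_ _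
            exact tsum_lawFrom_avoid hα hq0 hq1 hqx0 L ([x0] ++ List.ofFn w) m (by simp)
        _ = (∑' w : Fin m → S,
            ENNReal.ofReal (lawFrom (hoppeStep (fun _ => α) (fun _ => q)) [x0] (List.ofFn w))) *
              ∏ k ∈ Finset.range L, ENNReal.ofReal (1 - α * q x0 / (α + ((m + k : ℕ) : ℝ))) := by
            rw [ENNReal.tsum_mul_right]
        _ ≤ 1 * ∏ k ∈ Finset.range L, ENNReal.ofReal (1 - α * q x0 / (α + ((m + k : ℕ) : ℝ))) :=
            mul_le_mul_left (tsum_lawFrom_le_one hα hq0 hq1 m [x0] (by simp)) _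
        _ = ∏ k ∈ Finset.range L, ENNReal.ofReal (1 - α * q x0 / (α + ((m + k : ℕ) : ℝ))) :=
            one_mul _
    have h0 : P (A m) ≤ 0 :=
      ge_of_tendsto' (hoppe_factor_prod_tendsto_zero hα (mul_pos hα hqx0) (by nlinarith) m) key
    exact le_antisymm h0 zero_le
  have hUnull : P (⋃ m, A m) = 0 := measure_iUnion_null hAnull
  rw [ae_iff]
  refine measure_mono_null ?_ hUnull
  intro ω hω
  simp only [Set.mem_setOf_eq] at hω
  rw [Set.not_infinite] at hω
  obtain ⟨M, hM⟩ := hω.bddAbove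
  exact Set.mem_iUnion.mpr ⟨M, fun k hk hxk => absurd (hM hxk) (by omega)⟩
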